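/- Let p : ℝ^d → ℝ^m and q : ℝ^m → ℝ^s be polynomial maps with p(0) = 0 and q(0) = 0. Then for all i ∈ {1,…,s} and j ∈ {1,…,d}, k_{q∘p}^{ij} = Σ_{l=1}^m M_p(k_q^{il}) ⧢ k_p^{lj}. -/

import Mathlib

noncomputable section

open MeasureTheory

/-- Words in the alphabet `{1,…,d}`. -/
abbrev Word (d : ℕ) := List (Fin d)

/-- `T(ℝ^d)`: the real vector space with basis the words in `{1,…,d}`. -/
abbrev Tens (d : ℕ) := Word d →₀ ℝ

namespace SigPaper

variable {d m s : ℕ}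

/-- The basis word `w` as an element of `T(ℝ^d)`. -/
def wordT (w : Word d) : Tens d := Finsupp.single w 1

/-- The shuffle product of two words. -/
def shuffleWord : Word d → Word d → Tens d
  | [], v => Finsupp.single v 1
  | u, [] => Finsupp.single u 1
  | a :: u, b :: v =>
      Finsupp.mapDomain (fun w => a :: w) (shuffleWord u (b :: v)) +
      Finsupp.mapDomain (fun w => b :: w) (shuffleWord (a :: u) v)
  termination_by u v => u.length + v.length
  decreasing_by all_goals simp +arith +decide

/-- The shuffle product `⧢` on `T(ℝ^d)`, the bilinear extension of the shuffle of words. -/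
def shuffle (x y : Tens d) : Tens d :=
  x.sum fun u a => y.sum fun v b => (a * b) • shuffleWord u v

/-- The operator appending the letter `i` at the end of every word (`T_i^+`). -/
def appendLetter (i : Fin d) (x : Tens d) : Tens d :=
  Finsupp.mapDomain (fun w => w ++ [i]) x

/-- The right half-shuffle of two words: `w ≻ (v∘i) = (w ⧢ v)∘i` (zero if the right word
is empty). -/
def halfShuffleWord (u v : Word d) : Tens d :=
  match v.getLast? with
  | none => 0
  | some i => appendLetter i (shuffleWord u v.dropLast)

/-- The right half-shuffle `≻`, extended bilinearly. -/
def halfShuffle (x y : Tens d) : Tens d :=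
  x.sum fun u a => y.sum fun v b => (a * b) • halfShuffleWord u v

/-- The letter-appending operator `T_i^+`. -/
def Tplus (i : Fin d) : Tens d → Tens d := appendLetter i

/-- `T_i^-` on a word: removes the last letter if it equals `i`, otherwise `0`. -/
def TminusWord (i : Fin d) (w : Word d) : Tens d :=
  match w.getLast? with
  | none => 0
  | some j => if j = i then Finsupp.single w.dropLast 1 else 0

/-- The letter-removing operator `T_i^-`. -/
def Tminus (i : Fin d) (x : Tens d) : Tens d := x.sum fun w a => a • TminusWord i w

/-- The single-letter word `i` in `T(ℝ^d)`. -/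
def letterT (i : Fin d) : Tens d := Finsupp.single [i] 1

/-- Shuffle powers `x^{⧢ n}`. -/
def shufflePow (x : Tens d) : ℕ → Tens d
  | 0 => Finsupp.single [] 1
  | n + 1 => shuffle (shufflePow x n) x

/-- Shuffle product of a list of elements. -/
def shuffleList : List (Tens d) → Tens d
  | [] => Finsupp.single [] 1
  | x :: xs => shuffle x (shuffleList xs)

/-- Image of the monomial `x^t` under `φ_d`: the shuffle product of its letters. -/
def phiMon (t : Fin d →₀ ℕ) : Tens d :=
  shuffleList ((List.finRange d).map fun i => shufflePow (letterT i) (t i))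

/-- The embedding `φ_d : ℝ[x₁,…,x_d] → (T(ℝ^d), ⧢)` sending the monomial
`x_{i₁}⋯x_{i_l}` to `i₁ ⧢ ⋯ ⧢ i_l`. -/
def phi (f : MvPolynomial (Fin d) ℝ) : Tens d :=
  f.support.sum fun t => f.coeff t • phiMon t

/-- A polynomial map `p : ℝ^d → ℝ^m`, given by `m` polynomials in `d` variables. -/
abbrev PolyMap (d m : ℕ) := Fin m → MvPolynomial (Fin d) ℝ

/-- `k_p^{ij} = φ_d(∂p_i/∂x_j) ∈ T(ℝ^d)`. -/
def kP (p : PolyMap d m) (i : Fin m) (j : Fin d) : Tens d :=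
  phi (MvPolynomial.pderiv j (p i))

/-- Auxiliary: `M_p` on reversed words, so that `M_p(e) = e` and
`M_p(w∘i) = Σ_j (M_p(w) ⧢ k_p^{ij})∘j`. -/
def MpRev (p : PolyMap d m) : List (Fin m) → Tens d
  | [] => Finsupp.single [] 1
  | i :: w => ∑ j : Fin d, appendLetter j (shuffle (MpRev p w) (kP p i j))

/-- `M_p` on a word. -/
def MpWord (p : PolyMap d m) (w : Word m) : Tens d := MpRev p w.reverse

/-- The linear map `M_p : T(ℝ^m) → T(ℝ^d)`. -/
def Mp (p : PolyMap d m) (x : Tens m) : Tens d := x.sum fun w a => a • MpWord p w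

/-- `X : [0,L] → ℝ^d` is piecewise continuously differentiable: there is a partition
`0 = t₀ ≤ t₁ ≤ ⋯ ≤ t_n = L` such that `X` is `C¹` on each subinterval. -/
def PiecewiseC1 (X : ℝ → Fin d → ℝ) (L : ℝ) : Prop :=
  ∃ (n : ℕ) (t : Fin (n + 1) → ℝ), Monotone t ∧ t 0 = 0 ∧ t (Fin.last n) = L ∧
    ∀ k : Fin n, ContDiffOn ℝ 1 X (Set.Icc (t k.castSucc) (t k.succ))

/-- Iterated-integral signature coefficients, on reversed words:
`⟨σ(X|_{[0,t]}), w∘i⟩ = ∫_0^t ⟨σ(X|_{[0,r]}), w⟩ Ẋ^i_r dr`. -/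
def sigRev (X : ℝ → Fin d → ℝ) : List (Fin d) → ℝ → ℝ
  | [], _ => 1
  | i :: w, t => ∫ r in (0:ℝ)..t, sigRev X w r * deriv (fun u => X u i) r

/-- `⟨σ(X|_{[0,L]}), w⟩`, the signature coefficient of the word `w`. -/
def sigWord (X : ℝ → Fin d → ℝ) (L : ℝ) (w : Word d) : ℝ := sigRev X w.reverse L

/-- The pairing `⟨σ(X|_{[0,L]}), x⟩` for `x ∈ T(ℝ^d)`. -/
def sigT (X : ℝ → Fin d → ℝ) (L : ℝ) (x : Tens d) : ℝ :=
  x.sum fun w a => a * sigWord X L w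

/-- The transformed path `p(X) : t ↦ p(X(t))`. -/
def pPath (p : PolyMap d m) (X : ℝ → Fin d → ℝ) : ℝ → Fin m → ℝ :=
  fun t i => MvPolynomial.eval (X t) (p i)

/-- The translated polynomial map `p̃(y) = p(y + x₀) − p(x₀)`, satisfying `p̃(0) = 0`. -/
def ptilde (p : PolyMap d m) (x0 : Fin d → ℝ) : PolyMap d m := fun i =>
  MvPolynomial.aeval (fun j => MvPolynomial.X j + MvPolynomial.C (x0 j)) (p i) -
    MvPolynomial.C (MvPolynomial.eval x0 (p i))

/-- The pairing `⟨exp_∘(L·𝟙), x⟩` for `x ∈ T(ℝ¹)`: the coefficient of the word of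
length `n` in `exp_∘(L·𝟙)` is `Lⁿ/n!`. -/
def expPair (L : ℝ) (x : Tens 1) : ℝ :=
  x.sum fun w a => a * (L ^ w.length / (w.length.factorial : ℝ))

/-- The pairing `⟨σ(X) ∘ σ(Y), x⟩` of the concatenation product of two signatures with
`x ∈ T(ℝ^d)`: on a word `w` it is `Σ_{u∘v = w} ⟨σ(X), u⟩·⟨σ(Y), v⟩`. -/
def concatPair (X Y : ℝ → Fin d → ℝ) (L : ℝ) (x : Tens d) : ℝ :=
  x.sum fun w a =>
    a * ∑ k ∈ Finset.range (w.length + 1), sigWord X L (w.take k) * sigWord Y L (w.drop k)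


-- Basic shuffle lemmas

lemma shuffleWord_nil_left (v : Word d) : shuffleWord [] v = Finsupp.single v 1 := by
  cases v <;> simp [shuffleWord]

lemma shuffleWord_nil_right (u : Word d) : shuffleWord u [] = Finsupp.single u 1 := by
  cases u <;> simp [shuffleWord]

lemma shuffleWord_cons (a b : Fin d) (u v : Word d) :
    shuffleWord (a :: u) (b :: v) =
      Finsupp.mapDomain (fun w => a :: w) (shuffleWord u (b :: v)) +
      Finsupp.mapDomain (fun w => b :: w) (shuffleWord (a :: u) v) := by
  rw [shuffleWord]

/-- shuffle as a bilinear map. -/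
def shuffleLin : Tens d →ₗ[ℝ] Tens d →ₗ[ℝ] Tens d :=
  Finsupp.lsum ℝ fun u => LinearMap.toSpanSingleton ℝ _
    (Finsupp.lsum ℝ fun v => LinearMap.toSpanSingleton ℝ _ (shuffleWord u v))

lemma shuffle_eq (x y : Tens d) : shuffle x y = shuffleLin x y := by
  simp only [shuffle, shuffleLin, Finsupp.lsum_apply]
  rw [LinearMap.finsupp_sum_apply]
  refine Finsupp.sum_congr fun u hu => ?_
  simp only [LinearMap.toSpanSingleton_apply, LinearMap.smul_apply, Finsupp.lsum_apply]
  rw [Finsupp.smul_sum]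
  refine Finsupp.sum_congr fun v hv => ?_
  simp [LinearMap.toSpanSingleton_apply, mul_smul]

lemma shuffle_single (u v : Word d) (a b : ℝ) :
    shuffle (Finsupp.single u a) (Finsupp.single v b) = (a * b) • shuffleWord u v := by
  rw [shuffle_eq]
  simp [shuffleLin, Finsupp.lsum_single, LinearMap.toSpanSingleton_apply, mul_smul]

lemma shuffle_add_left (x y z : Tens d) : shuffle (x + y) z = shuffle x z + shuffle y z := by
  simp [shuffle_eq]
lemma shuffle_add_right (x y z : Tens d) : shuffle x (y + z) = shuffle x y + shuffle x z := by
  simp [shuffle_eq]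
lemma shuffle_smul_left (c : ℝ) (x y : Tens d) : shuffle (c • x) y = c • shuffle x y := by
  simp [shuffle_eq]
lemma shuffle_smul_right (c : ℝ) (x y : Tens d) : shuffle x (c • y) = c • shuffle x y := by
  simp [shuffle_eq]
@[simp] lemma shuffle_zero_left (y : Tens d) : shuffle 0 y = 0 := by simp [shuffle_eq]
@[simp] lemma shuffle_zero_right (x : Tens d) : shuffle x 0 = 0 := by simp [shuffle_eq]

lemma shuffle_sum_left {α : Type*} (t : Finset α) (f : α → Tens d) (y : Tens d) :
    shuffle (∑ i ∈ t, f i) y = ∑ i ∈ t, shuffle (f i) y := by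
  simp [shuffle_eq]
lemma shuffle_sum_right {α : Type*} (t : Finset α) (f : α → Tens d) (x : Tens d) :
    shuffle x (∑ i ∈ t, f i) = ∑ i ∈ t, shuffle x (f i) := by
  simp [shuffle_eq]

@[simp] lemma shuffle_one_left (x : Tens d) : shuffle (wordT []) x = x := by
  rw [shuffle_eq, wordT, shuffleLin, Finsupp.lsum_single, LinearMap.toSpanSingleton_apply,
    one_smul, Finsupp.lsum_apply]
  refine Eq.trans (Finsupp.sum_congr fun v hv => ?_) (Finsupp.sum_single x)
  simp [LinearMap.toSpanSingleton_apply, shuffleWord_nil_left, Finsupp.smul_single]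

lemma shuffleWord_comm : ∀ (u v : Word d), shuffleWord u v = shuffleWord v u
  | [], v => by rw [shuffleWord_nil_left, shuffleWord_nil_right]
  | a :: u, [] => by rw [shuffleWord_nil_left, shuffleWord_nil_right]
  | a :: u, b :: v => by
      rw [shuffleWord_cons, shuffleWord_cons, shuffleWord_comm u (b :: v),
        shuffleWord_comm (a :: u) v, add_comm]
  termination_by u v => u.length + v.length
  decreasing_by all_goals simp +arith +decide

lemma shuffle_comm (x y : Tens d) : shuffle x y = shuffle y x := by
  unfold shuffle
  rw [Finsupp.sum_comm]
  refine Finsupp.sum_congr fun v hv => Finsupp.sum_congr fun u hu => ?_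
  rw [mul_comm, shuffleWord_comm]

@[simp] lemma shuffle_one_right (x : Tens d) : shuffle x (wordT []) = x := by
  rw [shuffle_comm]
  exact shuffle_one_left x

lemma shuffleWord_apply_nil {u v : Word d} (h : u ≠ [] ∨ v ≠ []) :
    shuffleWord u v [] = 0 := by
  match u, v with
  | [], [] => simp at h
  | [], b :: v => rw [shuffleWord_nil_left]; simp
  | a :: u, [] => rw [shuffleWord_nil_right]; simp
  | a :: u, b :: v =>
      rw [shuffleWord_cons]
      rw [Finsupp.add_apply, Finsupp.mapDomain_notin_range, Finsupp.mapDomain_notin_range]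
      · simp
      · rintro ⟨w, hw⟩; simp at hw
      · rintro ⟨w, hw⟩; simp at hw

-- Associativity
lemma shuffle_mapCons (a b : Fin d) (v : Word d) (x : Tens d) :
    shuffle (Finsupp.mapDomain (fun w => a :: w) x) (wordT (b :: v)) =
      Finsupp.mapDomain (fun w => a :: w) (shuffle x (wordT (b :: v))) +
      Finsupp.mapDomain (fun w => b :: w)
        (shuffle (Finsupp.mapDomain (fun w => a :: w) x) (wordT v)) := by
  induction x using Finsupp.induction_linear with
  | zero => simp
  | add f g hf hg =>
      simp only [Finsupp.mapDomain_add, shuffle_add_left]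
      rw [hf, hg]
      abel
  | single u c =>
      simp only [Finsupp.mapDomain_single, wordT, shuffle_single, mul_one, shuffleWord_cons,
        Finsupp.mapDomain_smul, Finsupp.mapDomain_add, Finsupp.mapDomain_single, smul_add]

lemma shuffle_consWord_mapCons (a c : Fin d) (u : Word d) (y : Tens d) :
    shuffle (wordT (a :: u)) (Finsupp.mapDomain (fun w => c :: w) y) =
      Finsupp.mapDomain (fun w => a :: w)
        (shuffle (wordT u) (Finsupp.mapDomain (fun w => c :: w) y)) +
      Finsupp.mapDomain (fun w => c :: w) (shuffle (wordT (a :: u)) y) := by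
  rw [shuffle_comm, shuffle_mapCons, shuffle_comm y, shuffle_comm (wordT u), add_comm]

lemma shuffle_word_assoc : ∀ (u v w : Word d),
    shuffle (shuffleWord u v) (wordT w) = shuffle (wordT u) (shuffleWord v w)
  | [], v, w => by
      rw [shuffleWord_nil_left]
      show shuffle (wordT v) (wordT w) = shuffle (wordT []) (shuffleWord v w)
      rw [shuffle_one_left, wordT, wordT, shuffle_single, one_mul, one_smul]
  | a :: u, [], w => by
      rw [shuffleWord_nil_right, shuffleWord_nil_left]
      rfl
  | a :: u, b :: v, [] => by
      rw [shuffleWord_nil_right, shuffle_one_right]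
      show shuffleWord (a :: u) (b :: v) = shuffle (wordT (a :: u)) (wordT (b :: v))
      rw [wordT, wordT, shuffle_single, one_mul, one_smul]
  | a :: u, b :: v, c :: w => by
      have h1 : Finsupp.mapDomain (fun w' => c :: w')
            (shuffle (Finsupp.mapDomain (fun w' => a :: w') (shuffleWord u (b :: v))) (wordT w)) +
          Finsupp.mapDomain (fun w' => c :: w')
            (shuffle (Finsupp.mapDomain (fun w' => b :: w') (shuffleWord (a :: u) v)) (wordT w)) =
          Finsupp.mapDomain (fun w' => c :: w')
            (shuffle (wordT (a :: u)) (shuffleWord (b :: v) w)) := by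
        rw [← Finsupp.mapDomain_add, ← shuffle_add_left, ← shuffleWord_cons,
          shuffle_word_assoc (a :: u) (b :: v) w]
      rw [shuffleWord_cons a b u v, shuffle_add_left,
        shuffle_mapCons a c w (shuffleWord u (b :: v)),
        shuffle_mapCons b c w (shuffleWord (a :: u) v),
        shuffle_word_assoc u (b :: v) (c :: w),
        shuffle_word_assoc (a :: u) v (c :: w),
        shuffleWord_cons b c v w,
        shuffle_add_right (wordT (a :: u)),
        shuffle_consWord_mapCons a b u (shuffleWord v (c :: w)),
        shuffle_consWord_mapCons a c u (shuffleWord (b :: v) w),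
        shuffle_add_right (wordT u), Finsupp.mapDomain_add, ← h1]
      abel
  termination_by u v w => u.length + v.length + w.length
  decreasing_by all_goals simp +arith +decide

lemma shuffle_assoc (x y z : Tens d) :
    shuffle (shuffle x y) z = shuffle x (shuffle y z) := by
  induction x using Finsupp.induction_linear with
  | zero => simp
  | add f g hf hg => simp only [shuffle_add_left, hf, hg]
  | single u a =>
    induction y using Finsupp.induction_linear with
    | zero => simp
    | add f g hf hg => simp only [shuffle_add_left, shuffle_add_right, hf, hg]
    | single v b =>
      induction z using Finsupp.induction_linear with
      | zero => simp
      | add f g hf hg => simp only [shuffle_add_right, hf, hg]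
      | single w c =>
        have hu : (Finsupp.single u a : Tens d) = a • wordT u := by
          rw [wordT, Finsupp.smul_single, smul_eq_mul, mul_one]
        have hv : (Finsupp.single v b : Tens d) = b • wordT v := by
          rw [wordT, Finsupp.smul_single, smul_eq_mul, mul_one]
        have hw : (Finsupp.single w c : Tens d) = c • wordT w := by
          rw [wordT, Finsupp.smul_single, smul_eq_mul, mul_one]
        rw [hu, hv, hw]
        simp only [shuffle_smul_left, shuffle_smul_right]
        rw [show shuffle (wordT u) (wordT v) = shuffleWord u v by
            rw [wordT, wordT, shuffle_single, one_mul, one_smul],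
          show shuffle (wordT v) (wordT w) = shuffleWord v w by
            rw [wordT, wordT, shuffle_single, one_mul, one_smul],
          shuffle_word_assoc]
-- Tminus machinery
lemma TminusWord_nil (i : Fin d) : TminusWord i ([] : Word d) = 0 := by
  simp [TminusWord]

lemma TminusWord_singleton (i a : Fin d) :
    TminusWord i [a] = if a = i then Finsupp.single ([] : Word d) 1 else 0 := by
  simp [TminusWord]

lemma TminusWord_cons (i a : Fin d) (w : Word d) (h : w ≠ []) :
    TminusWord i (a :: w) = Finsupp.mapDomain (fun w' => a :: w') (TminusWord i w) := by
  obtain ⟨b, t, rfl⟩ := List.exists_cons_of_ne_nil h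
  unfold TminusWord
  rw [List.getLast?_cons_cons]
  cases hgl : (b :: t).getLast? with
  | none => simp at hgl
  | some j =>
      simp only []
      split_ifs
      · rw [List.dropLast_cons₂, Finsupp.mapDomain_single]
      · rw [Finsupp.mapDomain_zero]

def TminusLin (i : Fin d) : Tens d →ₗ[ℝ] Tens d :=
  Finsupp.lsum ℝ fun w => LinearMap.toSpanSingleton ℝ _ (TminusWord i w)

lemma Tminus_eq (i : Fin d) (x : Tens d) : Tminus i x = TminusLin i x := by
  simp only [Tminus, TminusLin, Finsupp.lsum_apply]
  exact Finsupp.sum_congr fun w hw => rfl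

lemma Tminus_add (i : Fin d) (x y : Tens d) : Tminus i (x + y) = Tminus i x + Tminus i y := by
  simp [Tminus_eq]
lemma Tminus_smul (i : Fin d) (c : ℝ) (x : Tens d) : Tminus i (c • x) = c • Tminus i x := by
  simp [Tminus_eq]
@[simp] lemma Tminus_zero (i : Fin d) : Tminus i (0 : Tens d) = 0 := by simp [Tminus_eq]
lemma Tminus_single (i : Fin d) (w : Word d) (c : ℝ) :
    Tminus i (Finsupp.single w c) = c • TminusWord i w := by
  simp [Tminus_eq, TminusLin, Finsupp.lsum_single, LinearMap.toSpanSingleton_apply]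
lemma Tminus_wordT (i : Fin d) (w : Word d) : Tminus i (wordT w) = TminusWord i w := by
  rw [wordT, Tminus_single, one_smul]

lemma Tminus_mapCons (i a : Fin d) (x : Tens d) :
    Tminus i (Finsupp.mapDomain (fun w => a :: w) x) =
      Finsupp.mapDomain (fun w => a :: w) (Tminus i x) + (x []) • TminusWord i [a] := by
  induction x using Finsupp.induction_linear with
  | zero => simp
  | add f g hf hg =>
      rw [Finsupp.mapDomain_add, Tminus_add, hf, hg, Tminus_add, Finsupp.mapDomain_add,
        Finsupp.add_apply, add_smul]
      abel
  | single w c =>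
      rw [Finsupp.mapDomain_single, Tminus_single]
      cases w with
      | nil =>
          rw [Tminus_single, TminusWord_nil, smul_zero, Finsupp.mapDomain_zero, zero_add,
            Finsupp.single_eq_same]
      | cons b t =>
          rw [Tminus_single, TminusWord_cons i a (b :: t) (List.cons_ne_nil b t),
            Finsupp.mapDomain_smul, Finsupp.single_eq_of_ne' (List.cons_ne_nil b t), zero_smul,
            add_zero]
-- Tminus is a shuffle derivation
lemma Tminus_H1 (j a b : Fin d) (u v : Word d) :
    shuffle (TminusWord j (a :: u)) (wordT (b :: v)) =
      Finsupp.mapDomain (fun w => a :: w) (shuffle (TminusWord j u) (wordT (b :: v))) +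
      Finsupp.mapDomain (fun w => b :: w) (shuffle (TminusWord j (a :: u)) (wordT v)) := by
  cases u with
  | nil =>
      rw [TminusWord_nil, shuffle_zero_left, Finsupp.mapDomain_zero, zero_add,
        TminusWord_singleton]
      split_ifs
      · rw [show (Finsupp.single ([] : Word d) 1) = wordT [] from rfl, shuffle_one_left,
          shuffle_one_left]
        simp [wordT, Finsupp.mapDomain_single]
      · rw [shuffle_zero_left, shuffle_zero_left, Finsupp.mapDomain_zero]
  | cons c t =>
      rw [TminusWord_cons j a (c :: t) (List.cons_ne_nil c t), shuffle_mapCons]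

lemma Tminus_H2 (j a b : Fin d) (u v : Word d) :
    shuffle (wordT (a :: u)) (TminusWord j (b :: v)) =
      Finsupp.mapDomain (fun w => a :: w) (shuffle (wordT u) (TminusWord j (b :: v))) +
      Finsupp.mapDomain (fun w => b :: w) (shuffle (wordT (a :: u)) (TminusWord j v)) := by
  rw [shuffle_comm, Tminus_H1, shuffle_comm (TminusWord j v), shuffle_comm (TminusWord j (b :: v)),
    add_comm]

lemma Tminus_shuffleWord (j : Fin d) : ∀ (u v : Word d),
    Tminus j (shuffleWord u v) =
      shuffle (TminusWord j u) (wordT v) + shuffle (wordT u) (TminusWord j v)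
  | [], v => by
      rw [shuffleWord_nil_left, show (Finsupp.single v 1 : Tens d) = wordT v from rfl,
        Tminus_wordT, TminusWord_nil, shuffle_zero_left, zero_add, shuffle_one_left]
  | a :: u, [] => by
      rw [shuffleWord_nil_right, show (Finsupp.single (a :: u) 1 : Tens d) = wordT (a :: u)
        from rfl, Tminus_wordT, TminusWord_nil, shuffle_zero_right, add_zero, shuffle_one_right]
  | a :: u, b :: v => by
      rw [shuffleWord_cons, Tminus_add, Tminus_mapCons, Tminus_mapCons,
        shuffleWord_apply_nil (Or.inr (List.cons_ne_nil b v)),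
        shuffleWord_apply_nil (Or.inl (List.cons_ne_nil a u)), zero_smul, zero_smul, add_zero,
        add_zero, Tminus_shuffleWord j u (b :: v), Tminus_shuffleWord j (a :: u) v,
        Finsupp.mapDomain_add, Finsupp.mapDomain_add, Tminus_H1, Tminus_H2]
      abel
  termination_by u v => u.length + v.length
  decreasing_by all_goals simp +arith +decide
lemma Tminus_shuffle (j : Fin d) (x y : Tens d) :
    Tminus j (shuffle x y) = shuffle (Tminus j x) y + shuffle x (Tminus j y) := by
  induction x using Finsupp.induction_linear with
  | zero => simp
  | add f g hf hg =>
      rw [shuffle_add_left, Tminus_add, hf, hg, Tminus_add, shuffle_add_left, shuffle_add_left]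
      abel
  | single u a =>
    induction y using Finsupp.induction_linear with
    | zero => simp
    | add f g hf hg =>
        rw [shuffle_add_right, Tminus_add, hf, hg, Tminus_add, shuffle_add_right,
          shuffle_add_right]
        abel
    | single v b =>
        have e1 : (Finsupp.single v b : Tens d) = b • wordT v := by
          rw [wordT, Finsupp.smul_single, smul_eq_mul, mul_one]
        have e2 : (Finsupp.single u a : Tens d) = a • wordT u := by
          rw [wordT, Finsupp.smul_single, smul_eq_mul, mul_one]
        rw [shuffle_single, Tminus_smul, Tminus_single, Tminus_single, Tminus_shuffleWord,
          smul_add, e1, e2, shuffle_smul_left, shuffle_smul_right, shuffle_smul_right,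
          shuffle_smul_left, smul_smul, smul_smul, mul_comm b a]

@[simp] lemma Tminus_one (j : Fin d) : Tminus j (wordT ([] : Word d)) = 0 := by
  rw [Tminus_wordT, TminusWord_nil]

lemma Tminus_letterT (j i : Fin d) :
    Tminus j (letterT i) = if i = j then wordT [] else 0 := by
  rw [letterT, Tminus_single, TminusWord_singleton]
  split_ifs <;> simp [wordT]

-- Tplus basics
lemma Tplus_add (i : Fin d) (x y : Tens d) : Tplus i (x + y) = Tplus i x + Tplus i y :=
  Finsupp.mapDomain_add
lemma Tplus_smul (i : Fin d) (c : ℝ) (x : Tens d) : Tplus i (c • x) = c • Tplus i x :=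
  Finsupp.mapDomain_smul _ _
@[simp] lemma Tplus_zero (i : Fin d) : Tplus i (0 : Tens d) = 0 := by
  simp [Tplus, appendLetter]
lemma Tplus_single (i : Fin d) (w : Word d) (c : ℝ) :
    Tplus i (Finsupp.single w c) = Finsupp.single (w ++ [i]) c := Finsupp.mapDomain_single

/-- Reconstruction of a tensor from the empty-word coefficient and the `T_j^-` parts. -/
lemma tensor_decomp (x : Tens d) :
    x = (x []) • wordT [] + ∑ j : Fin d, Tplus j (Tminus j x) := by
  induction x using Finsupp.induction_linear with
  | zero => simp
  | add f g hf hg =>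
      rw [Finsupp.add_apply, add_smul]
      simp only [Tminus_add, Tplus_add, Finset.sum_add_distrib]
      conv_lhs => rw [hf, hg]
      abel
  | single w c =>
      cases hw : w.getLast? with
      | none =>
          have : w = [] := by cases w with | nil => rfl | cons a t => simp at hw
          subst this
          rw [Finsupp.single_eq_same]
          simp only [Tminus_single, TminusWord_nil, smul_zero, Tplus_zero, Finset.sum_const_zero,
            add_zero, wordT, Finsupp.smul_single, smul_eq_mul, mul_one]
      | some l =>
          have hne : w ≠ [] := by cases w with | nil => simp at hw | cons a t => simp
          have hl : l = w.getLast hne := by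
            rw [List.getLast?_eq_getLast hne] at hw
            exact (Option.some_inj.mp hw).symm
          have ht : ∀ j, TminusWord j w = if l = j then Finsupp.single w.dropLast 1 else 0 := by
            intro j
            unfold TminusWord
            rw [hw]
          rw [Finsupp.single_eq_of_ne' hne, zero_smul, zero_add]
          simp only [Tminus_single, ht, smul_ite, smul_zero]
          rw [Finset.sum_congr rfl fun j _ =>
            (show Tplus j (if l = j then c • Finsupp.single w.dropLast 1 else 0) =
              if l = j then Tplus j (c • Finsupp.single w.dropLast 1) else 0 by
                split_ifs <;> simp), Fintype.sum_ite_eq l, Finsupp.smul_single, smul_eq_mul,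
            mul_one, Tplus_single, hl, List.dropLast_concat_getLast hne]
-- phi basics
lemma phi_eq_sum_of_subset {f : MvPolynomial (Fin d) ℝ} {S : Finset (Fin d →₀ ℕ)}
    (h : f.support ⊆ S) : phi f = ∑ t ∈ S, f.coeff t • phiMon t := by
  rw [phi]
  exact Finset.sum_subset h fun t _ ht => by
    rw [MvPolynomial.notMem_support_iff.mp ht, zero_smul]

@[simp] lemma phi_zero : phi (0 : MvPolynomial (Fin d) ℝ) = 0 := by simp [phi]

lemma phi_add (f g : MvPolynomial (Fin d) ℝ) : phi (f + g) = phi f + phi g := by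
  classical
  rw [phi_eq_sum_of_subset (MvPolynomial.support_add (p := f) (q := g)),
    phi_eq_sum_of_subset (Finset.subset_union_left (s₁ := f.support) (s₂ := g.support)),
    phi_eq_sum_of_subset (Finset.subset_union_right (s₁ := f.support) (s₂ := g.support)),
    ← Finset.sum_add_distrib]
  exact Finset.sum_congr rfl fun t _ => by rw [MvPolynomial.coeff_add, add_smul]

lemma phi_smul (c : ℝ) (f : MvPolynomial (Fin d) ℝ) : phi (c • f) = c • phi f := by
  rw [phi_eq_sum_of_subset (MvPolynomial.support_smul (a := c) (f := f)), phi, Finset.smul_sum]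
  exact Finset.sum_congr rfl fun t _ => by rw [MvPolynomial.coeff_smul, smul_eq_mul, mul_smul]

lemma phi_monomial (t : Fin d →₀ ℕ) (c : ℝ) :
    phi (MvPolynomial.monomial t c) = c • phiMon t := by
  rcases eq_or_ne c 0 with rfl | hc
  · simp [phi]
  · rw [phi]
    rw [MvPolynomial.support_monomial]
    simp [hc, MvPolynomial.coeff_monomial]

lemma shuffleList_wordT_nil (l : List (Tens d)) (h : ∀ x ∈ l, x = wordT []) :
    shuffleList l = wordT [] := by
  induction l with
  | nil => rfl
  | cons x xs ih =>
      rw [shuffleList, h x (List.mem_cons_self), ih fun y hy => h y (List.mem_cons_of_mem _ hy),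
        shuffle_one_left]

lemma phiMon_zero : phiMon (0 : Fin d →₀ ℕ) = wordT [] := by
  apply shuffleList_wordT_nil
  intro x hx
  simp only [List.mem_map] at hx
  obtain ⟨i, _, rfl⟩ := hx
  simp only [Finsupp.coe_zero, Pi.zero_apply]
  rfl

lemma phi_C (c : ℝ) : phi (MvPolynomial.C c : MvPolynomial (Fin d) ℝ) = c • wordT [] := by
  rw [MvPolynomial.C_apply, phi_monomial, phiMon_zero]

@[simp] lemma phi_one : phi (1 : MvPolynomial (Fin d) ℝ) = wordT [] := by
  rw [← MvPolynomial.C_1, phi_C, one_smul]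
-- multiplicativity of phi
lemma shuffleList_update {α : Type*} [DecidableEq α] (i : α) (F : α → Tens d) (y : Tens d)
    (l : List α) (h : l.count i = 1) :
      shuffleList (l.map fun k => if k = i then shuffle (F k) y else F k) =
        shuffle (shuffleList (l.map F)) y := by
  induction l with
  | nil => simp at h
  | cons a l ih =>
      rcases eq_or_ne a i with rfl | ha
      · have hl : a ∉ l := by
          rw [List.count_cons_self] at h
          exact List.count_eq_zero.mp (Nat.succ_injective h)
        have hmap : (l.map fun k => if k = a then shuffle (F k) y else F k) = l.map F := by
          refine List.map_congr_left fun k hk => ?_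
          exact if_neg fun he => hl (by rwa [he] at hk)
        rw [List.map_cons, List.map_cons, if_pos rfl, shuffleList, shuffleList, hmap,
          shuffle_assoc, shuffle_comm y, ← shuffle_assoc]
      · have hl : l.count i = 1 := by rwa [List.count_cons_of_ne ha] at h
        rw [List.map_cons, List.map_cons, if_neg ha, shuffleList, shuffleList, ih hl,
          ← shuffle_assoc]

lemma phiMon_add_single (t : Fin d →₀ ℕ) (i : Fin d) :
    phiMon (t + Finsupp.single i 1) = shuffle (phiMon t) (letterT i) := by
  have hlist : ((List.finRange d).map fun k =>
        shufflePow (letterT k) ((t + Finsupp.single i 1 : Fin d →₀ ℕ) k)) =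
      (List.finRange d).map fun k => if k = i then
        shuffle (shufflePow (letterT k) (t k)) (letterT i) else shufflePow (letterT k) (t k) :=
    List.map_congr_left fun k _ => by
      rcases eq_or_ne k i with rfl | hk
      · rw [if_pos rfl, Finsupp.add_apply, Finsupp.single_eq_same]
        rfl
      · rw [if_neg hk, Finsupp.add_apply, Finsupp.single_eq_of_ne' (Ne.symm hk), add_zero]
  rw [phiMon, phiMon, hlist]
  exact shuffleList_update i _ (letterT i) (List.finRange d)
    (List.count_eq_one_of_mem (List.nodup_finRange d) (List.mem_finRange i))

lemma phi_mul_X (f : MvPolynomial (Fin d) ℝ) (i : Fin d) :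
    phi (f * MvPolynomial.X i) = shuffle (phi f) (letterT i) := by
  induction f using MvPolynomial.induction_on' with
  | monomial t c =>
      rw [MvPolynomial.X, MvPolynomial.monomial_mul, mul_one, phi_monomial, phi_monomial,
        phiMon_add_single, shuffle_smul_left]
  | add p q hp hq =>
      rw [add_mul, phi_add, phi_add, hp, hq, shuffle_add_left]

lemma phi_mul (f g : MvPolynomial (Fin d) ℝ) : phi (f * g) = shuffle (phi f) (phi g) := by
  induction g using MvPolynomial.induction_on generalizing f with
  | C c =>
      rw [show f * MvPolynomial.C c = c • f from by
          rw [MvPolynomial.smul_eq_C_mul, mul_comm], phi_smul, phi_C, shuffle_smul_right,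
        shuffle_one_right]
  | add p q hp hq => rw [mul_add, phi_add, hp, hq, phi_add, shuffle_add_right]
  | mul_X p i hp =>
      rw [← mul_assoc, phi_mul_X, hp, phi_mul_X, shuffle_assoc]
lemma shuffle_letter_apply_nil (i : Fin d) (x : Tens d) : (shuffle x (letterT i)) [] = 0 := by
  induction x using Finsupp.induction_linear with
  | zero => simp
  | add f g hf hg => rw [shuffle_add_left, Finsupp.add_apply, hf, hg, add_zero]
  | single u a =>
      rw [letterT, shuffle_single, mul_one, Finsupp.smul_apply,
        shuffleWord_apply_nil (Or.inr (List.cons_ne_nil i [])), smul_zero]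

lemma phi_apply_nil (f : MvPolynomial (Fin d) ℝ) :
    phi f [] = MvPolynomial.eval (0 : Fin d → ℝ) f := by
  induction f using MvPolynomial.induction_on with
  | C c => simp [phi_C, wordT]
  | add p q hp hq => rw [phi_add, Finsupp.add_apply, hp, hq, map_add]
  | mul_X p i hp =>
      rw [phi_mul_X, shuffle_letter_apply_nil, map_mul, MvPolynomial.eval_X, Pi.zero_apply,
        mul_zero]

lemma Tminus_phi (j : Fin d) (f : MvPolynomial (Fin d) ℝ) :
    Tminus j (phi f) = phi (MvPolynomial.pderiv j f) := by
  induction f using MvPolynomial.induction_on with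
  | C c => rw [phi_C, Tminus_smul, Tminus_one, smul_zero, MvPolynomial.pderiv_C, phi_zero]
  | add p q hp hq => rw [phi_add, Tminus_add, hp, hq, map_add, phi_add]
  | mul_X p i hp =>
      rw [phi_mul_X, Tminus_shuffle, hp, Tminus_letterT, MvPolynomial.pderiv_mul,
        phi_add, phi_mul_X, phi_mul]
      congr 1
      rcases eq_or_ne i j with rfl | hij
      · rw [if_pos rfl, MvPolynomial.pderiv_X_self, phi_one, shuffle_one_right]
      · rw [if_neg hij, MvPolynomial.pderiv_X_of_ne hij, phi_zero, shuffle_zero_right]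

/-- The decomposition `φ(f) = f(0)·e + Σ_j T_j⁺ φ(∂_j f)`. -/
lemma phi_decomp (f : MvPolynomial (Fin d) ℝ) :
    phi f = (MvPolynomial.eval (0 : Fin d → ℝ) f) • wordT [] +
      ∑ j : Fin d, Tplus j (phi (MvPolynomial.pderiv j f)) := by
  conv_lhs => rw [tensor_decomp (phi f)]
  rw [phi_apply_nil]
  congr 1
  exact Finset.sum_congr rfl fun j _ => by rw [Tminus_phi]

/-- Chain rule. -/
lemma pderiv_bind₁ (p : PolyMap d m) (g : MvPolynomial (Fin m) ℝ) (j : Fin d) :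
    MvPolynomial.pderiv j (MvPolynomial.bind₁ p g) =
      ∑ i : Fin m, MvPolynomial.bind₁ p (MvPolynomial.pderiv i g) * MvPolynomial.pderiv j (p i) := by
  induction g using MvPolynomial.induction_on with
  | C c => simp [MvPolynomial.bind₁_C_right, MvPolynomial.pderiv_C]
  | add f g hf hg =>
      rw [map_add, map_add, hf, hg, ← Finset.sum_add_distrib]
      refine Finset.sum_congr rfl fun i _ => ?_
      rw [map_add, map_add, add_mul]
  | mul_X f i hf =>
      simp only [map_mul, MvPolynomial.bind₁_X_right, MvPolynomial.pderiv_mul, hf,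
        MvPolynomial.pderiv_X, Pi.single_apply, map_add, map_mul,
        apply_ite (MvPolynomial.bind₁ p), map_one, map_zero, add_mul, Finset.sum_add_distrib,
        Finset.sum_mul, ite_mul, mul_ite, one_mul, mul_one, zero_mul, mul_zero,
        Finset.sum_ite_eq, Finset.mem_univ, if_true]
      congr 1
      exact Finset.sum_congr rfl fun l _ => by ring
-- Mp basics
def MpLin (p : PolyMap d m) : Tens m →ₗ[ℝ] Tens d :=
  Finsupp.lsum ℝ fun w => LinearMap.toSpanSingleton ℝ _ (MpWord p w)

lemma Mp_eq (p : PolyMap d m) (x : Tens m) : Mp p x = MpLin p x := by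
  simp only [Mp, MpLin, Finsupp.lsum_apply]
  exact Finsupp.sum_congr fun w hw => rfl

lemma Mp_add (p : PolyMap d m) (x y : Tens m) : Mp p (x + y) = Mp p x + Mp p y := by
  simp [Mp_eq]
lemma Mp_smul (p : PolyMap d m) (c : ℝ) (x : Tens m) : Mp p (c • x) = c • Mp p x := by
  simp [Mp_eq]
@[simp] lemma Mp_zero (p : PolyMap d m) : Mp p (0 : Tens m) = 0 := by simp [Mp_eq]
lemma Mp_single (p : PolyMap d m) (w : Word m) (c : ℝ) :
    Mp p (Finsupp.single w c) = c • MpWord p w := by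
  simp [Mp_eq, MpLin, Finsupp.lsum_single, LinearMap.toSpanSingleton_apply]
@[simp] lemma Mp_one (p : PolyMap d m) : Mp p (wordT []) = wordT [] := by
  rw [wordT, Mp_single, one_smul]
  rfl

lemma phi_finset_sum {ι : Type*} (s : Finset ι) (f : ι → MvPolynomial (Fin d) ℝ) :
    phi (∑ i ∈ s, f i) = ∑ i ∈ s, phi (f i) := by
  classical
  induction s using Finset.induction_on with
  | empty => simp
  | @insert a s hni ih => rw [Finset.sum_insert hni, Finset.sum_insert hni, phi_add, ih]

lemma Mp_finset_sum {ι : Type*} (p : PolyMap d m) (s : Finset ι) (f : ι → Tens m) :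
    Mp p (∑ i ∈ s, f i) = ∑ i ∈ s, Mp p (f i) := by
  classical
  induction s using Finset.induction_on with
  | empty => simp
  | @insert a s hni ih => rw [Finset.sum_insert hni, Finset.sum_insert hni, Mp_add, ih]

lemma Tplus_finset_sum {ι : Type*} (j : Fin d) (s : Finset ι) (f : ι → Tens d) :
    Tplus j (∑ i ∈ s, f i) = ∑ i ∈ s, Tplus j (f i) := by
  classical
  induction s using Finset.induction_on with
  | empty => simp
  | @insert a s hni ih => rw [Finset.sum_insert hni, Finset.sum_insert hni, Tplus_add, ih]

lemma MpWord_append (p : PolyMap d m) (w : Word m) (i : Fin m) :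
    MpWord p (w ++ [i]) = ∑ j : Fin d, appendLetter j (shuffle (MpWord p w) (kP p i j)) := by
  rw [MpWord, MpWord, List.reverse_concat, MpRev]

lemma Mp_Tplus (p : PolyMap d m) (i : Fin m) (x : Tens m) :
    Mp p (Tplus i x) = ∑ j : Fin d, Tplus j (shuffle (Mp p x) (kP p i j)) := by
  induction x using Finsupp.induction_linear with
  | zero => simp
  | add f g hf hg =>
      rw [Tplus_add, Mp_add, hf, hg, Mp_add, ← Finset.sum_add_distrib]
      exact Finset.sum_congr rfl fun j _ => by rw [shuffle_add_left, Tplus_add]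
  | single w c =>
      rw [Tplus_single, Mp_single, MpWord_append, Finset.smul_sum, Mp_single]
      exact Finset.sum_congr rfl fun j _ => by
        rw [shuffle_smul_left, Tplus_smul]
        rfl

lemma pderiv_eq_zero_of_totalDegree_eq_zero {g : MvPolynomial (Fin m) ℝ}
    (h : g.totalDegree = 0) (i : Fin m) : MvPolynomial.pderiv i g = 0 := by
  conv_lhs => rw [g.as_sum]
  rw [map_sum]
  refine Finset.sum_eq_zero fun t ht => ?_
  rw [MvPolynomial.pderiv_monomial,
    (MvPolynomial.totalDegree_eq_zero_iff (Fin m) g).mp h t ht i, Nat.cast_zero, mul_zero,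
    MvPolynomial.monomial_zero]

lemma totalDegree_pderiv_le {g : MvPolynomial (Fin m) ℝ} {n : ℕ} (h : g.totalDegree ≤ n + 1)
    (i : Fin m) : (MvPolynomial.pderiv i g).totalDegree ≤ n := by
  conv_lhs => rw [g.as_sum]
  rw [map_sum]
  refine le_trans (MvPolynomial.totalDegree_finset_sum _ _) (Finset.sup_le fun t ht => ?_)
  rw [MvPolynomial.pderiv_monomial]
  rcases eq_or_ne (t i) 0 with h0 | h0
  · rw [h0, Nat.cast_zero, mul_zero, MvPolynomial.monomial_zero, MvPolynomial.totalDegree_zero]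
    exact Nat.zero_le n
  · refine le_trans (MvPolynomial.totalDegree_monomial_le _ _) ?_
    have hle : Finsupp.single i 1 ≤ t := Finsupp.single_le_iff.mpr (Nat.one_le_iff_ne_zero.mpr h0)
    have hsum : ((t - Finsupp.single i 1).sum fun _ e => e) + 1 = t.sum fun _ e => e := by
      conv_rhs => rw [← tsub_add_cancel_of_le hle]
      rw [Finsupp.sum_add_index' (fun _ => rfl) (fun _ _ _ => rfl),
        Finsupp.sum_single_index rfl]
    have hdeg : (t.sum fun _ e => e) ≤ n + 1 := le_trans (MvPolynomial.le_totalDegree ht) h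
    suffices hh : ((t - Finsupp.single i 1).sum fun _ e => e) ≤ n by exact hh
    omega
lemma eval_zero_bind₁ (p : PolyMap d m) (hp : ∀ i, MvPolynomial.eval (0 : Fin d → ℝ) (p i) = 0)
    (g : MvPolynomial (Fin m) ℝ) :
    MvPolynomial.eval (0 : Fin d → ℝ) (MvPolynomial.bind₁ p g) =
      MvPolynomial.eval (0 : Fin m → ℝ) g := by
  induction g using MvPolynomial.induction_on with
  | C c => rw [MvPolynomial.bind₁_C_right, MvPolynomial.eval_C, MvPolynomial.eval_C]
  | add f g hf hg => rw [map_add, map_add, hf, hg, map_add]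
  | mul_X f i hf =>
      rw [map_mul, MvPolynomial.bind₁_X_right, map_mul, hf, hp i, map_mul,
        MvPolynomial.eval_X, Pi.zero_apply, mul_zero]

lemma Mp_phi_step (p : PolyMap d m) (hp : ∀ i, MvPolynomial.eval (0 : Fin d → ℝ) (p i) = 0)
    (g : MvPolynomial (Fin m) ℝ)
    (h : ∀ i, Mp p (phi (MvPolynomial.pderiv i g)) =
      phi (MvPolynomial.bind₁ p (MvPolynomial.pderiv i g))) :
    Mp p (phi g) = phi (MvPolynomial.bind₁ p g) := by
  rw [phi_decomp g, Mp_add, Mp_smul, Mp_one, Mp_finset_sum, phi_decomp (MvPolynomial.bind₁ p g),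
    eval_zero_bind₁ p hp g]
  congr 1
  refine Eq.trans
    (Finset.sum_congr rfl fun i _ => Mp_Tplus p i (phi (MvPolynomial.pderiv i g))) ?_
  rw [Finset.sum_comm]
  refine Finset.sum_congr rfl fun j _ => ?_
  rw [pderiv_bind₁ p g j, phi_finset_sum, Tplus_finset_sum]
  refine Finset.sum_congr rfl fun i _ => ?_
  rw [h i, phi_mul]
  rfl

lemma Mp_phi (p : PolyMap d m) (hp : ∀ i, MvPolynomial.eval (0 : Fin d → ℝ) (p i) = 0) :
    ∀ (n : ℕ) (g : MvPolynomial (Fin m) ℝ), g.totalDegree ≤ n →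
      Mp p (phi g) = phi (MvPolynomial.bind₁ p g) := by
  intro n
  induction n with
  | zero =>
      intro g hg
      refine Mp_phi_step p hp g fun i => ?_
      rw [pderiv_eq_zero_of_totalDegree_eq_zero (Nat.le_zero.mp hg) i, phi_zero, Mp_zero,
        map_zero, phi_zero]
  | succ n ih =>
      intro g hg
      exact Mp_phi_step p hp g fun i => ih _ (totalDegree_pderiv_le hg i)


/-- For polynomial maps `p : ℝ^d → ℝ^m` and `q : ℝ^m → ℝ^s` with
`p(0) = 0` and `q(0) = 0`, `k_{q∘p}^{ij} = Σ_{l=1}^m M_p(k_q^{il}) ⧢ k_p^{lj}`. -/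
theorem kP_comp (d m s : ℕ) (p : PolyMap d m) (q : PolyMap m s)
    (hp : ∀ i, MvPolynomial.eval (0 : Fin d → ℝ) (p i) = 0)
    (hq : ∀ i, MvPolynomial.eval (0 : Fin m → ℝ) (q i) = 0) :
    ∀ (i : Fin s) (j : Fin d),
      kP (fun l => MvPolynomial.bind₁ p (q l)) i j =
        ∑ l : Fin m, shuffle (Mp p (kP q i l)) (kP p l j) := by
  intro i j
  rw [kP, pderiv_bind₁ p (q i) j, phi_finset_sum]
  refine Finset.sum_congr rfl fun l _ => ?_
  rw [phi_mul, kP, kP, Mp_phi p hp (MvPolynomial.pderiv l (q i)).totalDegree _ le_rfl]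


end SigPaper
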